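/- Let τ, ρ, ε, a > 0 and b₁ > 0, and consider the vector field V₊(w,η,ξ) = (−τ(w−F(η)), ρ(w−G₊(η)), ε(b₁(η−ξ) − a(1−η))) with F and G₊ as in the quadratic approximation with Table 1 parameters. At every point, the Jacobian of V₊ is block lower-triangular with characteristic polynomial (λ + ε b₁)·det(λI − M(η)), where M(η) has rows (−τ, τ F′(η)) and (ρ, −ρ G₊′(η)); in particular −ε b₁ is an eigenvalue with eigenvector (0,0,1). Consequently, at the equilibrium Q*₊,s = (F(η*₊,s), η*₊,s, (1+a/b₁)η*₊,s − a/b₁), where η*₊,s is the zero of F − G₊ in (0.9,1) with (F−G₊)′(η*₊,s) < 0, all three eigenvalues of the Jacobian have negative real part (Q*₊,s is a sink), while at Q*₊,u = (F(η*₊,u), η*₊,u, (1+a/b₁)η*₊,u − a/b₁), where η*₊,u ∈ (0.2,0.3) has (F−G₊)′(η*₊,u) > 0, the Jacobian has exactly one eigenvalue with positive real part and two with negative real part (a saddle with two-dimensional stable manifold). -/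

import Mathlib

noncomputable section

namespace GlacialCycles

/-- Insolation `Q = 343` W/m². -/
def Qp : ℝ := 343
/-- OLR constant `A = 202`. -/
def Ap : ℝ := 202
/-- OLR constant `B = 1.9`. -/
def Bp : ℝ := 1.9
/-- Transport constant `C = 3.04`. -/
def Cp : ℝ := 3.04
/-- Ice-free albedo `α₁ = 0.32`. -/
def α1p : ℝ := 0.32
/-- Ice albedo `α₂ = 0.62`. -/
def α2p : ℝ := 0.62
/-- `α₀ = (α₁+α₂)/2 = 0.47`. -/
def α0p : ℝ := 0.47
/-- `s₂ = −0.482`. -/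
def s2p : ℝ := -0.482
/-- `L = Q/(B+C)`. -/
def Lp : ℝ := Qp / (Bp + Cp)

/-- Second even Legendre polynomial `p₂(η) = (3η²−1)/2`. -/
def p2 (η : ℝ) : ℝ := (3*η^2 - 1)/2
/-- `P₂(η) = ∫₀^η p₂ = (η³−η)/2`. -/
def P2 (η : ℝ) : ℝ := (η^3 - η)/2

/-- `F(η) = (1/B)(Q(1−α₀) − A + C·L·(α₂−α₁)·(η − 1/2 + s₂ P₂(η)))`. -/
def F (η : ℝ) : ℝ :=
  (1/Bp) * (Qp*(1 - α0p) - Ap + Cp*Lp*(α2p - α1p)*(η - 1/2 + s2p * P2 η))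

/-- `G_{T_c}(η) = −L s₂ (1−α₀) p₂(η) + T_c`. -/
def G (Tc η : ℝ) : ℝ := -Lp*s2p*(1 - α0p) * p2 η + Tc

/-- `G₊ = G_{T_c}` with `T_c⁺ = −10`. -/
def Gplus (η : ℝ) : ℝ := G (-10) η
/-- `G₋ = G_{T_c}` with `T_c⁻ = −5.5`. -/
def Gminus (η : ℝ) : ℝ := G (-5.5) η

/-- `h₊ = F − G₊`. -/
def hplus (η : ℝ) : ℝ := F η - Gplus η
/-- `h₋ = F − G₋`. -/
def hminus (η : ℝ) : ℝ := F η - Gminus η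

/-- The retreat vector field `V₊` on `ℝ³` (coordinates `(w, η, ξ) = (x 0, x 1, x 2)`). -/
def Vplus (τ ρ ε a b1 : ℝ) (x : Fin 3 → ℝ) : Fin 3 → ℝ :=
  ![-τ * (x 0 - F (x 1)), ρ * (x 0 - Gplus (x 1)),
    ε * (b1 * (x 1 - x 2) - a * (1 - x 1))]

/-- The Jacobian matrix of `V₊`. -/
def Jplus (τ ρ ε a b1 η : ℝ) : Matrix (Fin 3) (Fin 3) ℝ :=
  !![-τ, τ * deriv F η, 0;
     ρ, -ρ * deriv Gplus η, 0;
     0, ε * (b1 + a), -ε * b1]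

/-- The planar block `M(η)`. -/
def Mmat (τ ρ η : ℝ) : Matrix (Fin 2) (Fin 2) ℝ :=
  !![-τ, τ * deriv F η; ρ, -ρ * deriv Gplus η]

/-! ### Auxiliary lemmas -/

open Polynomial

lemma hasDerivAt_p2 (η : ℝ) : HasDerivAt p2 (3*η) η := by
  unfold p2
  have h := (((hasDerivAt_pow 2 η).const_mul 3).sub_const 1).div_const 2
  refine h.congr_deriv ?_
  push_cast; ring

lemma hasDerivAt_P2 (η : ℝ) : HasDerivAt P2 (p2 η) η := by
  unfold P2 p2
  have h := ((hasDerivAt_pow 3 η).sub (hasDerivAt_id η)).div_const 2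
  refine h.congr_deriv ?_
  push_cast; ring

lemma hasDerivAt_F (η : ℝ) :
    HasDerivAt F ((1/Bp) * (Cp*Lp*(α2p - α1p) * (1 + s2p * p2 η))) η := by
  have h1 : HasDerivAt (fun η : ℝ => η - 1/2 + s2p * P2 η) (1 + s2p * p2 η) η :=
    ((hasDerivAt_id η).sub_const _).add ((hasDerivAt_P2 η).const_mul s2p)
  have h2 := ((h1.const_mul (Cp*Lp*(α2p - α1p))).const_add
      (Qp*(1 - α0p) - Ap)).const_mul (1/Bp)
  unfold F
  convert h2 using 1

lemma hasDerivAt_G (Tc η : ℝ) :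
    HasDerivAt (G Tc) (-Lp*s2p*(1 - α0p) * (3*η)) η := by
  unfold G
  exact ((hasDerivAt_p2 η).const_mul (-Lp*s2p*(1 - α0p))).add_const Tc

lemma hasDerivAt_Gplus (η : ℝ) :
    HasDerivAt Gplus (-Lp*s2p*(1 - α0p) * (3*η)) η := hasDerivAt_G (-10) η

lemma deriv_Gplus (η : ℝ) : deriv Gplus η = -Lp*s2p*(1 - α0p) * (3*η) :=
  (hasDerivAt_Gplus η).deriv

lemma deriv_sub_FG (η : ℝ) :
    deriv (fun η => F η - Gplus η) η = deriv F η - deriv Gplus η := by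
  rw [show (fun η => F η - Gplus η) = F - Gplus from rfl, ((hasDerivAt_F η).sub (hasDerivAt_Gplus η)).deriv, (hasDerivAt_F η).deriv, deriv_Gplus]

lemma Gcoef_pos : (0:ℝ) < -Lp*s2p*(1 - α0p) := by
  norm_num [Lp, s2p, α0p, Qp, Bp, Cp]

lemma deriv_Gplus_pos {η : ℝ} (hη : 0 < η) : 0 < deriv Gplus η := by
  rw [deriv_Gplus]
  have := Gcoef_pos
  nlinarith

lemma charpoly3 (A B C_ D E K : ℝ) :
    (!![A, B, 0; C_, D, 0; 0, E, K] : Matrix (Fin 3) (Fin 3) ℝ).charpoly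
      = (X - Polynomial.C K) * (!![A, B; C_, D] : Matrix (Fin 2) (Fin 2) ℝ).charpoly := by
  rw [Matrix.charpoly, Matrix.charpoly, Matrix.det_fin_three, Matrix.det_fin_two]
  simp [Matrix.charmatrix_apply, Matrix.diagonal_apply]
  ring

lemma charpoly2 (A B C_ D : ℝ) :
    (!![A, B; C_, D] : Matrix (Fin 2) (Fin 2) ℝ).charpoly
      = X^2 + Polynomial.C (-(A+D)) * X + Polynomial.C (A*D - B*C_) := by
  rw [Matrix.charpoly, Matrix.det_fin_two]
  simp [Matrix.charmatrix_apply, Matrix.diagonal_apply]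
  ring

lemma roots_cubic {k μ₁ μ₂ : ℂ} {p : ℂ[X]}
    (hp : p = (X - C k) * ((X - C μ₁) * (X - C μ₂))) :
    p.roots = {μ₁, μ₂, k} := by
  have h : p = (({μ₁, μ₂, k} : Multiset ℂ).map fun a => X - C a).prod := by
    rw [hp]
    simp [Multiset.insert_eq_cons]
    ring
  rw [h, Polynomial.roots_multiset_prod_X_sub_C]

lemma quad_factor_of (b c μ₁ μ₂ : ℂ) (h1 : μ₁ + μ₂ = -b) (h2 : μ₁ * μ₂ = c) :
    (X:ℂ[X])^2 + C b * X + C c = (X - C μ₁) * (X - C μ₂) := by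
  have : b = -(μ₁ + μ₂) := by rw [h1]; ring
  rw [this, ← h2, map_neg, map_add, map_mul]; ring

lemma quad_neg (b c : ℝ) (hb : 0 < b) (hc : 0 < c) :
    ∃ μ₁ μ₂ : ℂ, ((X:ℂ[X])^2 + C (b:ℂ) * X + C (c:ℂ)) = (X - C μ₁) * (X - C μ₂) ∧
      μ₁.re < 0 ∧ μ₂.re < 0 := by
  rcases le_or_gt 0 (b^2 - 4*c) with hD | hD
  · set s := Real.sqrt (b^2 - 4*c) with hs
    have hs2 : s^2 = b^2 - 4*c := Real.sq_sqrt hD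
    have hsnn : 0 ≤ s := Real.sqrt_nonneg _
    have hsb : s < b := by nlinarith
    refine ⟨((-b + s)/2 : ℝ), ((-b - s)/2 : ℝ), quad_factor_of _ _ _ _ ?_ ?_, ?_, ?_⟩
    · push_cast; ring
    · have hr : ((-b + s)/2) * ((-b - s)/2) = c := by nlinarith
      exact_mod_cast hr
    · simp only [Complex.ofReal_re]; linarith
    · simp only [Complex.ofReal_re]; linarith
  · set s := Real.sqrt (4*c - b^2) with hs
    have hs2 : s^2 = 4*c - b^2 := Real.sq_sqrt (by linarith)
    refine ⟨(-b/2 : ℝ) + Complex.I * (s/2 : ℝ), (-b/2 : ℝ) - Complex.I * (s/2 : ℝ),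
      quad_factor_of _ _ _ _ ?_ ?_, ?_, ?_⟩
    · push_cast; ring
    · have : ((-b/2 : ℝ) + Complex.I * (s/2 : ℝ)) * ((-b/2 : ℝ) - Complex.I * (s/2 : ℝ))
          = ((b^2:ℝ):ℂ)/4 - Complex.I^2 * ((s^2:ℝ):ℂ)/4 := by push_cast; ring
      rw [this, Complex.I_sq, hs2]; push_cast; ring
    · simp; linarith
    · simp; linarith

lemma quad_saddle (b c : ℝ) (hc : c < 0) :
    ∃ μ₁ μ₂ : ℂ, ((X:ℂ[X])^2 + C (b:ℂ) * X + C (c:ℂ)) = (X - C μ₁) * (X - C μ₂) ∧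
      0 < μ₁.re ∧ μ₂.re < 0 := by
  have hD : 0 ≤ b^2 - 4*c := by nlinarith
  set s := Real.sqrt (b^2 - 4*c) with hs
  have hs2 : s^2 = b^2 - 4*c := Real.sq_sqrt hD
  have hsnn : 0 ≤ s := Real.sqrt_nonneg _
  have h1 : b < s := by nlinarith
  have h2 : -b < s := by nlinarith
  refine ⟨((-b + s)/2 : ℝ), ((-b - s)/2 : ℝ), quad_factor_of _ _ _ _ ?_ ?_, ?_, ?_⟩
  · push_cast; ring
  · have hr : ((-b + s)/2) * ((-b - s)/2) = c := by nlinarith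
    exact_mod_cast hr
  · simp only [Complex.ofReal_re]; linarith
  · simp only [Complex.ofReal_re]; linarith

lemma Jplus_charpoly (τ ρ ε a b1 η : ℝ) :
    (Jplus τ ρ ε a b1 η).charpoly
      = (Polynomial.X + Polynomial.C (ε * b1)) * (Mmat τ ρ η).charpoly := by
  have h := charpoly3 (-τ) (τ * deriv F η) ρ (-ρ * deriv Gplus η) (ε * (b1 + a)) (-ε * b1)
  rw [show (Jplus τ ρ ε a b1 η) = !![-τ, τ * deriv F η, 0; ρ, -ρ * deriv Gplus η, 0;
      0, ε * (b1 + a), -ε * b1] from rfl, h,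
    show (-ε * b1 : ℝ) = -(ε * b1) by ring, map_neg, sub_neg_eq_add]
  rfl

lemma Mmat_charpoly (τ ρ η : ℝ) :
    (Mmat τ ρ η).charpoly
      = X^2 + Polynomial.C (τ + ρ * deriv Gplus η) * X
        + Polynomial.C (τ * ρ * (deriv Gplus η - deriv F η)) := by
  have h := charpoly2 (-τ) (τ * deriv F η) ρ (-ρ * deriv Gplus η)
  rw [show (Mmat τ ρ η) = !![-τ, τ * deriv F η; ρ, -ρ * deriv Gplus η] from rfl, h]
  ring_nf

/-- The roots part, for a single equilibrium value `η`. -/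
lemma roots_part (τ ρ ε a b1 : ℝ) (hτ : 0 < τ) (hρ : 0 < ρ) (hε : 0 < ε) (hb1 : 0 < b1)
    {η : ℝ} (hη : 0 < η) {μ₁ μ₂ : ℂ}
    (hfac : ((X:ℂ[X])^2 + C ((τ + ρ * deriv Gplus η : ℝ):ℂ) * X
        + C ((τ * ρ * (deriv Gplus η - deriv F η) : ℝ):ℂ)) = (X - C μ₁) * (X - C μ₂)) :
    (((Jplus τ ρ ε a b1 η).charpoly).map (algebraMap ℝ ℂ)).roots
      = {μ₁, μ₂, ((-(ε*b1):ℝ):ℂ)} := by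
  apply roots_cubic
  rw [Jplus_charpoly, Mmat_charpoly, Polynomial.map_mul]
  have h1 : (Polynomial.X + Polynomial.C (ε * b1)).map (algebraMap ℝ ℂ)
      = X - C ((-(ε*b1):ℝ):ℂ) := by
    simp [Polynomial.map_add]
  rw [h1, ← hfac]
  simp [Polynomial.map_add, Polynomial.map_mul, Polynomial.map_pow]

/-! ### Main theorem -/

open ContinuousLinearMap in
theorem retreat_jacobian_eigenvalues
    (τ ρ ε a b1 : ℝ) (hτ : 0 < τ) (hρ : 0 < ρ) (hε : 0 < ε) (ha : 0 < a) (hb1 : 0 < b1)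
    (ηs : ℝ) (hηs : ηs ∈ Set.Ioo (0.9:ℝ) 1) (hηs_eq : F ηs = Gplus ηs)
    (hηs_d : deriv (fun η => F η - Gplus η) ηs < 0)
    (ηu : ℝ) (hηu : ηu ∈ Set.Ioo (0.2:ℝ) 0.3) (hηu_eq : F ηu = Gplus ηu)
    (hηu_d : 0 < deriv (fun η => F η - Gplus η) ηu) :
    (∀ x : Fin 3 → ℝ,
      HasFDerivAt (Vplus τ ρ ε a b1)
        (LinearMap.toContinuousLinearMap (Matrix.toLin' (Jplus τ ρ ε a b1 (x 1)))) x) ∧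
    (∀ η : ℝ, (Jplus τ ρ ε a b1 η).charpoly
        = (Polynomial.X + Polynomial.C (ε * b1)) * (Mmat τ ρ η).charpoly) ∧
    (∀ η : ℝ, (Jplus τ ρ ε a b1 η).mulVec ![0, 0, 1] = (-(ε * b1)) • ![0, 0, 1]) ∧
    (∃ μ₁ μ₂ μ₃ : ℂ,
      (((Jplus τ ρ ε a b1 ηs).charpoly).map (algebraMap ℝ ℂ)).roots = {μ₁, μ₂, μ₃} ∧
      μ₁.re < 0 ∧ μ₂.re < 0 ∧ μ₃.re < 0) ∧
    (∃ μ₁ μ₂ μ₃ : ℂ,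
      (((Jplus τ ρ ε a b1 ηu).charpoly).map (algebraMap ℝ ℂ)).roots = {μ₁, μ₂, μ₃} ∧
      0 < μ₁.re ∧ μ₂.re < 0 ∧ μ₃.re < 0) := by
  refine ⟨?_, Jplus_charpoly τ ρ ε a b1, ?_, ?_, ?_⟩
  · -- Jacobian
    intro x
    have hFd : HasDerivAt F (deriv F (x 1)) (x 1) :=
      (hasDerivAt_F (x 1)).differentiableAt.hasDerivAt
    have hGd : HasDerivAt Gplus (deriv Gplus (x 1)) (x 1) :=
      (hasDerivAt_Gplus (x 1)).differentiableAt.hasDerivAt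
    rw [hasFDerivAt_pi']
    intro i
    fin_cases i
    · have h0 : HasFDerivAt (fun y : Fin 3 → ℝ => -τ * (y 0 - F (y 1)))
          ((-τ) • ((proj 0 : (Fin 3 → ℝ) →L[ℝ] ℝ) - deriv F (x 1) • proj 1)) x :=
        ((hasFDerivAt_apply 0 x).sub
          (hFd.comp_hasFDerivAt (f := fun y : Fin 3 → ℝ => y 1) x (hasFDerivAt_apply 1 x))).const_mul (-τ)
      refine h0.congr_fderiv ?_
      ext v
      simp [Matrix.toLin'_apply, Matrix.mulVec, dotProduct, Fin.sum_univ_three, Jplus]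
      ring
    · have h1 : HasFDerivAt (fun y : Fin 3 → ℝ => ρ * (y 0 - Gplus (y 1)))
          (ρ • ((proj 0 : (Fin 3 → ℝ) →L[ℝ] ℝ) - deriv Gplus (x 1) • proj 1)) x :=
        ((hasFDerivAt_apply 0 x).sub
          (hGd.comp_hasFDerivAt x (hasFDerivAt_apply 1 x))).const_mul ρ
      refine h1.congr_fderiv ?_
      ext v
      simp [Matrix.toLin'_apply, Matrix.mulVec, dotProduct, Fin.sum_univ_three, Jplus]
      ring
    · have h2 : HasFDerivAt (fun y : Fin 3 → ℝ => ε * (b1 * (y 1 - y 2) - a * (1 - y 1)))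
          (ε • (b1 • ((proj 1 : (Fin 3 → ℝ) →L[ℝ] ℝ) - proj 2) -
            a • ((0 : (Fin 3 → ℝ) →L[ℝ] ℝ) - proj 1))) x :=
        ((((hasFDerivAt_apply 1 x).sub (hasFDerivAt_apply 2 x)).const_mul b1).sub
          (((hasFDerivAt_const 1 x).sub (hasFDerivAt_apply 1 x)).const_mul a)).const_mul ε
      refine h2.congr_fderiv ?_
      ext v
      simp [Matrix.toLin'_apply, Matrix.mulVec, dotProduct, Fin.sum_univ_three, Jplus]
      ring
  · -- eigenvector
    intro η
    funext i
    fin_cases i <;>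
      simp [Jplus, Matrix.mulVec, dotProduct, Fin.sum_univ_three] <;> ring
  · -- sink
    have hη : (0:ℝ) < ηs := lt_trans (by norm_num) hηs.1
    have hb : 0 < τ + ρ * deriv Gplus ηs :=
      by have := deriv_Gplus_pos hη; nlinarith
    have hc : 0 < τ * ρ * (deriv Gplus ηs - deriv F ηs) := by
      rw [deriv_sub_FG] at hηs_d
      have := mul_pos (mul_pos hτ hρ) (show 0 < deriv Gplus ηs - deriv F ηs by linarith)
      linarith
    obtain ⟨μ₁, μ₂, hfac, h1, h2⟩ := quad_neg _ _ hb hc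
    refine ⟨μ₁, μ₂, ((-(ε*b1):ℝ):ℂ), roots_part τ ρ ε a b1 hτ hρ hε hb1 hη hfac, h1, h2, ?_⟩
    simp only [Complex.ofReal_re]
    nlinarith
  · -- saddle
    have hη : (0:ℝ) < ηu := lt_trans (by norm_num) hηu.1
    have hc : τ * ρ * (deriv Gplus ηu - deriv F ηu) < 0 := by
      rw [deriv_sub_FG] at hηu_d
      have := mul_pos (mul_pos hτ hρ) (show 0 < deriv F ηu - deriv Gplus ηu by linarith)
      nlinarith
    obtain ⟨μ₁, μ₂, hfac, h1, h2⟩ := quad_saddle _ _ hc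
    refine ⟨μ₁, μ₂, ((-(ε*b1):ℝ):ℂ), roots_part τ ρ ε a b1 hτ hρ hε hb1 hη hfac, h1, h2, ?_⟩
    simp only [Complex.ofReal_re]
    nlinarith

end GlacialCycles
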